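/- Let λ : Fin 4 → (ZMod 2)² be given by λ₁ = λ₃ = (1,0) and λ₂ = λ₄ = (0,1), and call (i,j) adjacent if (i,j) ∈ {(1,2),(2,3),(3,4),(4,1)}. Let G be the presented group with generators β_{i,g} for i ∈ Fin 4 and g ∈ (ZMod 2)², and relators: β_{i,g}·β_{i,g+λᵢ} for all i and g; β_{i,g}·β_{j,g+λᵢ}·β_{i,g+λⱼ}⁻¹·β_{j,g}⁻¹ for all adjacent pairs (i,j) and all g; and β_{1,g} and β_{2,g} for all g. Define γ : (ZMod 2)² → W by γ(a,b) = s₁^a · s₂^b (with a, b ∈ {0,1}). Then the assignment β_{i,g} ↦ γ(g + λᵢ) · sᵢ · γ(g) respects all the relators, i.e. it extends to a well-defined group homomorphism ψ : G → W. -/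

import Mathlib

/-- The Coxeter matrix of the 4-cycle: off-diagonal entries are `2` for cyclically adjacent
indices and `0` (i.e. `∞`) for the two opposite pairs. -/
def C4 : CoxeterMatrix (Fin 4) where
  M := Matrix.of fun i j : Fin 4 ↦
    if i = j then 1
    else if (i.val + 1) % 4 = j.val ∨ (j.val + 1) % 4 = i.val then 2 else 0
  off_diagonal := by
    intro i i' h
    fin_cases i <;> fin_cases i' <;> simp_all

/-- `W`, the right-angled Coxeter group of the 4-cycle. -/
abbrev W : Type := C4.Group

/-- The simple reflections `s₁, s₂, s₃, s₄` of `W`, indexed by `Fin 4`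
(so `s 0 = s₁`, `s 1 = s₂`, `s 2 = s₃`, `s 3 = s₄`). -/
def s (i : Fin 4) : W := C4.simple i

/-- The coloring `λ` of the four edges of the square: `λ₁ = λ₃ = (1,0)`, `λ₂ = λ₄ = (0,1)`
(indexed by `Fin 4`, so index `0` is `λ₁`, etc.). -/
def lam : Fin 4 → ZMod 2 × ZMod 2 := ![(1, 0), (0, 1), (1, 0), (0, 1)]

/-- `(i, j)` is an *adjacent* pair of edge indices if it is one of
`(1,2), (2,3), (3,4), (4,1)` (in `Fin 4` indexing: `(0,1), (1,2), (2,3), (3,0)`). -/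
def Adj (i j : Fin 4) : Prop := (i.val + 1) % 4 = j.val

/-- The relator set of the paper's presentation of `π₁(M_F, p₀)`: generators `β_{i,g}` for
`i ∈ Fin 4`, `g ∈ (ZMod 2)²`, and relators `β_{i,g}·β_{i,g+λᵢ}`,
`β_{i,g}·β_{j,g+λᵢ}·β_{i,g+λⱼ}⁻¹·β_{j,g}⁻¹` for adjacent `(i,j)`, and `β_{1,g}`, `β_{2,g}`. -/
def rels : Set (FreeGroup (Fin 4 × (ZMod 2 × ZMod 2))) :=
  {r | (∃ i g, r = FreeGroup.of (i, g) * FreeGroup.of (i, g + lam i)) ∨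
       (∃ i j g, Adj i j ∧
          r = FreeGroup.of (i, g) * FreeGroup.of (j, g + lam i) *
              (FreeGroup.of (i, g + lam j))⁻¹ * (FreeGroup.of (j, g))⁻¹) ∨
       (∃ g, r = FreeGroup.of (0, g) ∨ r = FreeGroup.of (1, g))}

/-- The presented group `G` with generators `β_{i,g}` and the relators `rels`. -/
abbrev G : Type := PresentedGroup rels

/-- The map `γ : (ZMod 2)² → W`, `γ(a,b) = s₁^a · s₂^b`. -/
def gam (p : ZMod 2 × ZMod 2) : W := s 0 ^ p.1.val * s 1 ^ p.2.val

/-! ### Auxiliary lemmas -/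

private lemma s_mul_self (i : Fin 4) : s i * s i = 1 :=
  C4.toCoxeterSystem.simple_mul_simple_self i

private lemma s_inv (i : Fin 4) : (s i)⁻¹ = s i :=
  C4.toCoxeterSystem.inv_simple i

private lemma s_cancel (i : Fin 4) (w : W) : s i * (s i * w) = w := by
  rw [← mul_assoc, s_mul_self, one_mul]

private lemma sComm {i j : Fin 4} (h : C4.M i j = 2) : s j * s i = s i * s j := by
  have h2 := C4.toCoxeterSystem.simple_mul_simple_pow i j
  have h2' : (s i * s j) * (s i * s j) = 1 := by
    have : (s i * s j) ^ 2 = 1 := by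
      simpa [s, show C4 i j = C4.M i j from rfl, h] using h2
    rwa [pow_two] at this
  have h3 : s i * s j = (s i * s j)⁻¹ := mul_eq_one_iff_eq_inv.mp h2'
  rw [mul_inv_rev, s_inv, s_inv] at h3
  exact h3.symm

private lemma c10 : s 1 * s 0 = s 0 * s 1 := sComm (by decide)
private lemma c12 : s 1 * s 2 = s 2 * s 1 := sComm (by decide)
private lemma c30 : s 3 * s 0 = s 0 * s 3 := sComm (by decide)
private lemma c32 : s 3 * s 2 = s 2 * s 3 := sComm (by decide)

private lemma c10' (w : W) : s 1 * (s 0 * w) = s 0 * (s 1 * w) := by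
  rw [← mul_assoc, c10, mul_assoc]
private lemma c12' (w : W) : s 1 * (s 2 * w) = s 2 * (s 1 * w) := by
  rw [← mul_assoc, c12, mul_assoc]
private lemma c30' (w : W) : s 3 * (s 0 * w) = s 0 * (s 3 * w) := by
  rw [← mul_assoc, c30, mul_assoc]
private lemma c32' (w : W) : s 3 * (s 2 * w) = s 2 * (s 3 * w) := by
  rw [← mul_assoc, c32, mul_assoc]

private lemma gam00 : gam (0, 0) = 1 := by
  simp [gam, show ((0 : ZMod 2)).val = 0 from rfl]
private lemma gam10 : gam (1, 0) = s 0 := by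
  simp [gam, show ((0 : ZMod 2)).val = 0 from rfl, show ((1 : ZMod 2)).val = 1 from rfl]
private lemma gam01 : gam (0, 1) = s 1 := by
  simp [gam, show ((0 : ZMod 2)).val = 0 from rfl, show ((1 : ZMod 2)).val = 1 from rfl]
private lemma gam11 : gam (1, 1) = s 0 * s 1 := by
  simp [gam, show ((1 : ZMod 2)).val = 1 from rfl]

private lemma z11 : (1 : ZMod 2) + 1 = 0 := by decide
private lemma fz0 : @Eq (ZMod 2) (0 : Fin (1+1)) 0 := rfl
private lemma fz1 : @Eq (ZMod 2) (1 : Fin (1+1)) 1 := rfl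

private lemma gam0 : gam 0 = 1 := gam00
private lemma gam1 : gam 1 = s 0 * s 1 := gam11
private lemma pa1 : (1 : ZMod 2 × ZMod 2) + (1, 0) = (0, 1) := by decide
private lemma pa2 : (1 : ZMod 2 × ZMod 2) + (0, 1) = (1, 0) := by decide
private lemma pa3 : ((0, 1) : ZMod 2 × ZMod 2) + (1, 0) = 1 := by decide
private lemma pa4 : ((1, 0) : ZMod 2 × ZMod 2) + (0, 1) = 1 := by decide
private lemma pa5 : ((0, 1) : ZMod 2 × ZMod 2) + (0, 1) = 0 := by decide
private lemma pa6 : ((1, 0) : ZMod 2 × ZMod 2) + (1, 0) = 0 := by decide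

/-- The assignment `β_{i,g} ↦ γ(g + λᵢ) · sᵢ · γ(g)` kills every relator of `G`, hence extends
to a well-defined group homomorphism `ψ : G → W` with
`ψ(β_{i,g}) = γ(g + λᵢ) · sᵢ · γ(g)`. -/
theorem stmt14 :
    (∀ r ∈ rels,
      FreeGroup.lift (fun p : Fin 4 × (ZMod 2 × ZMod 2) =>
        gam (p.2 + lam p.1) * s p.1 * gam p.2) r = 1) ∧
    ∃ ψ : G →* W, ∀ (i : Fin 4) (g : ZMod 2 × ZMod 2),
      ψ (PresentedGroup.of (i, g)) = gam (g + lam i) * s i * gam g := by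
  have hkill : ∀ r ∈ rels,
      FreeGroup.lift (fun p : Fin 4 × (ZMod 2 × ZMod 2) =>
        gam (p.2 + lam p.1) * s p.1 * gam p.2) r = 1 := by
    rintro r (⟨i, g, rfl⟩ | ⟨i, j, g, hij, rfl⟩ | ⟨g, (rfl | rfl)⟩)
    · obtain ⟨a, b⟩ := g
      fin_cases i <;> fin_cases a <;> fin_cases b <;>
        simp [lam, Prod.mk_add_mk, fz0, fz1, z11, pa1, pa2, pa3, pa4, pa5, pa6, gam0, gam1, gam00, gam10, gam01, gam11,
          mul_assoc, s_mul_self, s_cancel, c10, c10', c12, c12', c30, c30', c32, c32']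
    · fin_cases i <;> fin_cases j <;> simp_all [Adj] <;>
      · obtain ⟨a, b⟩ := g
        fin_cases a <;> fin_cases b <;>
          simp [lam, Prod.mk_add_mk, fz0, fz1, z11, pa1, pa2, pa3, pa4, pa5, pa6, gam0, gam1, gam00, gam10, gam01, gam11, mul_inv_rev, s_inv,
            mul_assoc, s_mul_self, s_cancel, c10, c10', c12, c12', c30, c30', c32, c32']
    · obtain ⟨a, b⟩ := g
      fin_cases a <;> fin_cases b <;>
        simp [lam, Prod.mk_add_mk, fz0, fz1, z11, pa1, pa2, pa3, pa4, pa5, pa6, gam0, gam1, gam00, gam10, gam01, gam11,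
          mul_assoc, s_mul_self, s_cancel, c10, c10', c12, c12', c30, c30', c32, c32']
    · obtain ⟨a, b⟩ := g
      fin_cases a <;> fin_cases b <;>
        simp [lam, Prod.mk_add_mk, fz0, fz1, z11, pa1, pa2, pa3, pa4, pa5, pa6, gam0, gam1, gam00, gam10, gam01, gam11,
          mul_assoc, s_mul_self, s_cancel, c10, c10', c12, c12', c30, c30', c32, c32']
  exact ⟨hkill, PresentedGroup.toGroup hkill, fun i g => PresentedGroup.toGroup.of hkill⟩
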